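/- arXiv:2512.08817 — 2 statements merged into one kernel-verified Lean document; each statement's English description precedes it below -/
import Mathlib

section
/- A sorted word L (over the r=4 alphabet) has no descents if and only if, for each i ∈ {1,2,3}, the sequence L^{(i)} — obtained by listing w^{(i)} for each letter w of L with |w| ≥ i, in the order the letters occur — is weakly decreasing. -/
/-- The ground set `{1, 2, 3, 4}`. -/
def U4 : Finset ℕ := {1, 2, 3, 4}

/-- A letter of the `r = 4` alphabet: a nonempty proper subset of `{1,2,3,4}`
(hence of size `1`, `2` or `3`). -/
def IsLetter4 (s : Finset ℕ) : Prop := s ⊆ U4 ∧ s.Nonempty ∧ s ≠ U4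

/-- `nth s i` is the `i`-th smallest element of `s` (1-indexed), i.e. `s^{(i)}`. -/
def nth (s : Finset ℕ) (i : ℕ) : ℕ := (s.sort (· ≤ ·)).getD (i - 1) 0

/-- The pair `(v, w)` (for letters with `|v| ≤ |w|`) is a descent.  Here a singleton `{a}`
is the letter `a`, and `U4 \ {a}` is the barred letter `ā`. -/
def Descent4 (v w : Finset ℕ) : Prop :=
  (∃ a b : ℕ, v = {a} ∧ w = {b} ∧ a < b) ∨
  (∃ a b : ℕ, v = U4 \ {a} ∧ w = U4 \ {b} ∧ a > b) ∨
  (v = {1} ∧ w = U4 \ {1}) ∨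
  (∃ a b c : ℕ, v = {a} ∧ w = {b, c} ∧ a < b ∧ b < c) ∨
  (∃ a b c : ℕ, v = {a, b} ∧ a ≠ b ∧ w = U4 \ {c} ∧
    ∀ x ∈ U4 \ ({a, b} : Finset ℕ), c < x) ∨
  (∃ a₁ a₂ b₁ b₂ : ℕ, v = {a₁, a₂} ∧ a₁ < a₂ ∧ w = {b₁, b₂} ∧ b₁ < b₂ ∧
    (a₁ < b₁ ∨ a₂ < b₂))

/-- The sequence `L^{(i)}`: list the `i`-th smallest entry of each letter of `L` having at
least `i` elements, in order of occurrence. -/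
def seqNth (L : List (Finset ℕ)) (i : ℕ) : List ℕ :=
  (L.filter fun w => i ≤ w.card).map fun w => nth w i

/-! ### Auxiliary machinery -/

/-- The 14 letters of the alphabet. -/
def Letters : List (Finset ℕ) :=
  [{1},{2},{3},{4},{1,2},{1,3},{1,4},{2,3},{2,4},{3,4},{1,2,3},{1,2,4},{1,3,4},{2,3,4}]

lemma mem_letters {s : Finset ℕ} (h : IsLetter4 s) : s ∈ Letters := by
  have key : ∀ t ∈ U4.powerset, t.Nonempty → t ≠ U4 → t ∈ Letters := by decide
  exact key s (Finset.mem_powerset.mpr h.1) h.2.1 h.2.2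

/-- A kernel-computable version of `nth` for subsets of `U4`. -/
def myNth (s : Finset ℕ) (i : ℕ) : ℕ :=
  (((List.range 5).filter fun x => decide (x ∈ s))).getD (i - 1) 0

lemma sort_eq_filter_range {s : Finset ℕ} (hs : s ⊆ U4) :
    s.sort (· ≤ ·) = (List.range 5).filter (fun x => decide (x ∈ s)) := by
  have hperm : List.Perm (s.sort (· ≤ ·)) ((List.range 5).filter (fun x => decide (x ∈ s))) := by
    refine (List.perm_ext_iff_of_nodup (Finset.sort_nodup _ _)
      (((List.nodup_range (n := 5))).filter _)).mpr ?_
    intro a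
    simp only [Finset.mem_sort, List.mem_filter, List.mem_range, decide_eq_true_eq]
    constructor
    · intro ha
      have h4 := hs ha
      have : a < 5 := by
        simp only [U4, Finset.mem_insert, Finset.mem_singleton] at h4
        omega
      exact ⟨this, ha⟩
    · rintro ⟨-, ha⟩; exact ha
  exact List.Perm.eq_of_pairwise' (Finset.pairwise_sort _ _)
    (List.Pairwise.filter _ ((List.pairwise_lt_range (n := 5)).imp le_of_lt)) hperm

lemma nth_eq_myNth {s : Finset ℕ} (hs : s ⊆ U4) (i : ℕ) : nth s i = myNth s i := by
  rw [nth, myNth, sort_eq_filter_range hs]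

/-- A bounded (hence decidable) version of `Descent4`. -/
def DescentB (v w : Finset ℕ) : Prop :=
  (∃ a ∈ U4, ∃ b ∈ U4, v = {a} ∧ w = {b} ∧ a < b) ∨
  (∃ a ∈ U4, ∃ b ∈ U4, v = U4 \ {a} ∧ w = U4 \ {b} ∧ a > b) ∨
  (v = {1} ∧ w = U4 \ {1}) ∨
  (∃ a ∈ U4, ∃ b ∈ U4, ∃ c ∈ U4, v = {a} ∧ w = {b, c} ∧ a < b ∧ b < c) ∨
  (∃ a ∈ U4, ∃ b ∈ U4, ∃ c ∈ U4, v = {a, b} ∧ a ≠ b ∧ w = U4 \ {c} ∧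
    ∀ x ∈ U4 \ ({a, b} : Finset ℕ), c < x) ∨
  (∃ a₁ ∈ U4, ∃ a₂ ∈ U4, ∃ b₁ ∈ U4, ∃ b₂ ∈ U4, v = {a₁, a₂} ∧ a₁ < a₂ ∧ w = {b₁, b₂} ∧
    b₁ < b₂ ∧ (a₁ < b₁ ∨ a₂ < b₂))

instance (v w : Finset ℕ) : Decidable (DescentB v w) := by
  unfold DescentB; infer_instance

lemma sdiff_mem {s : Finset ℕ} (hs : s ≠ U4) {a : ℕ} (h : s = U4 \ {a}) : a ∈ U4 := by
  by_contra ha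
  exact hs (by rw [h, Finset.sdiff_singleton_eq_erase, Finset.erase_eq_self.mpr ha])

lemma descent_iff {v w : Finset ℕ} (hv : IsLetter4 v) (hw : IsLetter4 w) :
    Descent4 v w ↔ DescentB v w := by
  constructor
  · rintro (⟨a, b, rfl, rfl, hab⟩ | ⟨a, b, h1, h2, hab⟩ | ⟨h1, h2⟩ |
      ⟨a, b, c, rfl, rfl, h1, h2⟩ | ⟨a, b, c, h1, hne, h2, h3⟩ |
      ⟨a₁, a₂, b₁, b₂, h1, h12, h2, h34, h5⟩)
    · exact Or.inl ⟨a, hv.1 (Finset.mem_singleton_self a), b,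
        hw.1 (Finset.mem_singleton_self b), rfl, rfl, hab⟩
    · exact Or.inr <| Or.inl ⟨a, sdiff_mem hv.2.2 h1, b, sdiff_mem hw.2.2 h2, h1, h2, hab⟩
    · exact Or.inr <| Or.inr <| Or.inl ⟨h1, h2⟩
    · exact Or.inr <| Or.inr <| Or.inr <| Or.inl
        ⟨a, hv.1 (Finset.mem_singleton_self a), b, hw.1 (by simp), c, hw.1 (by simp),
          rfl, rfl, h1, h2⟩
    · refine Or.inr <| Or.inr <| Or.inr <| Or.inr <| Or.inl
        ⟨a, hv.1 (by simp [h1]), b, hv.1 (by simp [h1]), c, sdiff_mem hw.2.2 h2,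
          h1, hne, h2, h3⟩
    · exact Or.inr <| Or.inr <| Or.inr <| Or.inr <| Or.inr
        ⟨a₁, hv.1 (by simp [h1]), a₂, hv.1 (by simp [h1]), b₁, hw.1 (by simp [h2]),
          b₂, hw.1 (by simp [h2]), h1, h12, h2, h34, h5⟩
  · rintro (⟨a, _, b, _, h⟩ | ⟨a, _, b, _, h⟩ | h | ⟨a, _, b, _, c, _, h⟩ |
      ⟨a, _, b, _, c, _, h⟩ | ⟨a₁, _, a₂, _, b₁, _, b₂, _, h⟩)
    · exact Or.inl ⟨a, b, h⟩
    · exact Or.inr <| Or.inl ⟨a, b, h⟩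
    · exact Or.inr <| Or.inr <| Or.inl h
    · exact Or.inr <| Or.inr <| Or.inr <| Or.inl ⟨a, b, c, h⟩
    · exact Or.inr <| Or.inr <| Or.inr <| Or.inr <| Or.inl ⟨a, b, c, h⟩
    · exact Or.inr <| Or.inr <| Or.inr <| Or.inr <| Or.inr ⟨a₁, a₂, b₁, b₂, h⟩

set_option maxHeartbeats 4000000 in
lemma key : ∀ v ∈ Letters, ∀ w ∈ Letters, v.card ≤ w.card →
    (¬ DescentB v w ↔ ∀ i ∈ ({1, 2, 3} : Finset ℕ), i ≤ v.card → myNth w i ≤ myNth v i) := by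
  decide

lemma pointwise {v w : Finset ℕ} (hv : IsLetter4 v) (hw : IsLetter4 w)
    (hc : v.card ≤ w.card) :
    ¬ Descent4 v w ↔ ∀ i ∈ ({1, 2, 3} : Finset ℕ), i ≤ v.card → nth w i ≤ nth v i := by
  rw [descent_iff hv hw, key v (mem_letters hv) w (mem_letters hw) hc]
  simp only [nth_eq_myNth hv.1, nth_eq_myNth hw.1]

section ChainShims
set_option linter.deprecated false
@[simp] lemma chain'_nil_shim {α : Type*} {R : α → α → Prop} : List.Chain' R [] := List.isChain_nil
@[simp] lemma chain'_singleton_shim {α : Type*} {R : α → α → Prop} (a : α) :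
    List.Chain' R [a] := List.isChain_singleton a
lemma chain'_cons'_shim {α : Type*} {R : α → α → Prop} {x : α} {l : List α} :
    List.Chain' R (x :: l) ↔ (∀ y ∈ l.head?, R x y) ∧ List.Chain' R l := List.isChain_cons
lemma chain'_cons_shim {α : Type*} {R : α → α → Prop} {a b : α} {l : List α} :
    List.Chain' R (a :: b :: l) ↔ R a b ∧ List.Chain' R (b :: l) := List.isChain_cons_cons
lemma chain'_map_shim {α β : Type*} {R : α → α → Prop} (f : β → α) {l : List β} :
    List.Chain' R (l.map f) ↔ List.Chain' (fun a b : β => R (f a) (f b)) l := List.isChain_map f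
lemma chain'_iff_get_shim {α : Type*} {R : α → α → Prop} {l : List α} :
    List.Chain' R l ↔ ∀ (i : Nat) (_hi : i + 1 < l.length), R l[i] l[i + 1] :=
  List.isChain_iff_getElem
end ChainShims

lemma chain'_guard {α : Type*} {p : α → Prop} {R : α → α → Prop} :
    ∀ {l : List α}, (∀ x ∈ l, p x) →
      (l.Chain' (fun v w => p v → R v w) ↔ l.Chain' R)
  | [], _ => by simp
  | a :: l, h => by
    rw [chain'_cons'_shim, chain'_cons'_shim,
      chain'_guard (fun x hx => h x (List.mem_cons_of_mem _ hx))]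
    have hpa : p a := h a (List.mem_cons_self (a := a) (l := l))
    simp [hpa]

lemma chain'_filter {α : Type*} {q : α → Bool} {R : α → α → Prop} :
    ∀ {l : List α}, l.Pairwise (fun v w => q v → q w) →
      ((l.filter q).Chain' R ↔ l.Chain' (fun v w => q v → R v w))
  | [], _ => by simp
  | a :: l, h => by
    obtain ⟨h1, h2⟩ := List.pairwise_cons.mp h
    by_cases hpa : q a
    · have hall : ∀ x ∈ l, (q x : Prop) := fun x hx => h1 x hx hpa
      have hfl : l.filter q = l := List.filter_eq_self.mpr hall
      rw [List.filter_cons_of_pos hpa, hfl, chain'_cons'_shim, chain'_cons'_shim,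
        chain'_guard hall]
      simp [hpa]
    · rw [List.filter_cons_of_neg hpa, chain'_filter h2, chain'_cons'_shim]
      simp [hpa]

lemma chain_descent_iff : ∀ (L : List (Finset ℕ)), (∀ w ∈ L, IsLetter4 w) →
    L.Pairwise (fun v w => v.card ≤ w.card) →
    (L.Chain' (fun v w => ¬ Descent4 v w) ↔
      L.Chain' (fun v w => ∀ i ∈ ({1, 2, 3} : Finset ℕ), i ≤ v.card → nth w i ≤ nth v i))
  | [], _, _ => by simp
  | [a], _, _ => by simp
  | a :: b :: l, hl, hs => by
    rw [chain'_cons_shim, chain'_cons_shim,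
      chain_descent_iff (b :: l) (fun w hw => hl w (List.mem_cons_of_mem _ hw))
        (List.pairwise_cons.mp hs).2,
      pointwise (hl a (by simp)) (hl b (by simp))
        ((List.pairwise_cons.mp hs).1 b (by simp))]

/-- a sorted word over the `r = 4` alphabet has no descents iff each of the
sequences `L^{(1)}, L^{(2)}, L^{(3)}` is weakly decreasing. -/
theorem stmt1 (L : List (Finset ℕ)) (hletters : ∀ w ∈ L, IsLetter4 w)
    (hsorted : L.Pairwise fun v w => v.card ≤ w.card) :
    L.Chain' (fun v w => ¬ Descent4 v w) ↔
      ∀ i ∈ ({1, 2, 3} : Finset ℕ), (seqNth L i).Chain' (fun x y => y ≤ x) := by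
  have hstep : ∀ i : ℕ, ((seqNth L i).Chain' (fun x y => y ≤ x) ↔
      L.Chain' (fun v w => i ≤ v.card → nth w i ≤ nth v i)) := by
    intro i
    have hmono : L.Pairwise (fun v w : Finset ℕ =>
        (decide (i ≤ v.card) : Bool) → (decide (i ≤ w.card) : Bool)) := by
      refine hsorted.imp ?_
      intro v w h hi
      simp only [decide_eq_true_eq] at hi ⊢
      exact hi.trans h
    rw [seqNth, chain'_map_shim, chain'_filter hmono]
    simp only [decide_eq_true_eq]
  have hswap : L.Chain' (fun v w => ∀ i ∈ ({1, 2, 3} : Finset ℕ),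
        i ≤ v.card → nth w i ≤ nth v i) ↔
      ∀ i ∈ ({1, 2, 3} : Finset ℕ),
        L.Chain' (fun v w => i ≤ v.card → nth w i ≤ nth v i) := by
    simp only [chain'_iff_get_shim]
    constructor
    · intro h i hi j hj; exact h j hj i hi
    · intro h j hj i hi; exact h i hi j hj
  rw [chain_descent_iff L hletters hsorted, hswap]
  exact forall₂_congr fun i _ => (hstep i).symm
end

section
/- Every sorted lattice word over the r=4 alphabet with no descents has the form 1^p {1,2}^q 4̄^s for some p, q, s ≥ 0; that is, it consists of p copies of the letter {1}, followed by q copies of the letter {1,2}, followed by s copies of the letter 4̄ = {1,2,3}. -/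
/-- The coordinate `k` of the contribution vector in `ℤ⁴` of a letter: a letter of size
`1` or `2` contributes its indicator vector, and a barred letter `ā` (size `3`)
contributes `−e_a`. -/
def contrib4 (s : Finset ℕ) (k : ℕ) : ℤ :=
  if s.card ≤ 2 then (if k ∈ s then 1 else 0) else (if k ∈ U4 \ s then -1 else 0)

/-- Cumulative contribution of a word in coordinate `k`. -/
def cum4 (L : List (Finset ℕ)) (k : ℕ) : ℤ := (L.map fun s => contrib4 s k).sum

/-- A word is a lattice word if for every prefix the cumulative contribution
`(c₁, c₂, c₃, c₄)` satisfies `c₁ ≥ c₂ ≥ c₃ ≥ c₄`. -/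
def IsLatticeWord4 (L : List (Finset ℕ)) : Prop :=
  ∀ t : ℕ, ∀ k ∈ ({1, 2, 3} : Finset ℕ), cum4 (L.take t) (k + 1) ≤ cum4 (L.take t) k

def Good (s : Finset ℕ) : Prop := s = {1} ∨ s = {1, 2} ∨ s = {1, 2, 3}

/-- bounded (decidable) version of descent -/
def DD (v w : Finset ℕ) : Prop :=
  (∃ a ∈ List.range 5, ∃ b ∈ List.range 5, v = {a} ∧ w = {b} ∧ a < b) ∨
  (∃ a ∈ List.range 5, ∃ b ∈ List.range 5, v = U4 \ {a} ∧ w = U4 \ {b} ∧ a > b) ∨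
  (v = {1} ∧ w = U4 \ {1}) ∨
  (∃ a ∈ List.range 5, ∃ b ∈ List.range 5, ∃ c ∈ List.range 5,
    v = {a} ∧ w = {b, c} ∧ a < b ∧ b < c) ∨
  (∃ a ∈ List.range 5, ∃ b ∈ List.range 5, ∃ c ∈ List.range 5,
    v = {a, b} ∧ a ≠ b ∧ w = U4 \ {c} ∧ ∀ x ∈ U4 \ ({a, b} : Finset ℕ), c < x) ∨
  (∃ a₁ ∈ List.range 5, ∃ a₂ ∈ List.range 5, ∃ b₁ ∈ List.range 5, ∃ b₂ ∈ List.range 5,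
    v = {a₁, a₂} ∧ a₁ < a₂ ∧ w = {b₁, b₂} ∧ b₁ < b₂ ∧ (a₁ < b₁ ∨ a₂ < b₂))

instance (v w : Finset ℕ) : Decidable (DD v w) := by unfold DD; infer_instance

lemma DD_descent {v w : Finset ℕ} (h : DD v w) : Descent4 v w := by
  rcases h with ⟨a,_,b,_,h⟩|⟨a,_,b,_,h⟩|h|⟨a,_,b,_,c,_,h⟩|⟨a,_,b,_,c,_,h⟩|⟨a,_,b,_,c,_,d,_,h⟩
  · exact Or.inl ⟨a, b, h⟩
  · exact Or.inr (Or.inl ⟨a, b, h⟩)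
  · exact Or.inr (Or.inr (Or.inl h))
  · exact Or.inr (Or.inr (Or.inr (Or.inl ⟨a, b, c, h⟩)))
  · exact Or.inr (Or.inr (Or.inr (Or.inr (Or.inl ⟨a, b, c, h⟩))))
  · exact Or.inr (Or.inr (Or.inr (Or.inr (Or.inr ⟨a, b, c, d, h⟩))))

lemma cum4_nil (k : ℕ) : cum4 [] k = 0 := rfl

lemma cum4_cons (a : Finset ℕ) (t : List (Finset ℕ)) (k : ℕ) :
    cum4 (a :: t) k = contrib4 a k + cum4 t k := by simp [cum4]

lemma cum4_append_single (M : List (Finset ℕ)) (x : Finset ℕ) (k : ℕ) :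
    cum4 (M ++ [x]) k = cum4 M k + contrib4 x k := by simp [cum4]

lemma cum4_three {M : List (Finset ℕ)} (h : ∀ w ∈ M, Good w) : cum4 M 3 = 0 := by
  induction M with
  | nil => rfl
  | cons a t ih =>
    rw [cum4_cons, ih (fun w hw => h w (List.mem_cons_of_mem _ hw))]
    rcases h a (List.mem_cons_self) with rfl | rfl | rfl <;> decide

lemma cum4_two_ones {M : List (Finset ℕ)} (h : ∀ w ∈ M, w = {1}) : cum4 M 2 = 0 := by
  induction M with
  | nil => rfl
  | cons a t ih =>
    rw [cum4_cons, ih (fun w hw => h w (List.mem_cons_of_mem _ hw)),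
      h a (List.mem_cons_self)]
    decide

lemma cum4_four_small {M : List (Finset ℕ)} (h : ∀ w ∈ M, w = {1} ∨ w = {1, 2}) :
    cum4 M 4 = 0 := by
  induction M with
  | nil => rfl
  | cons a t ih =>
    rw [cum4_cons, ih (fun w hw => h w (List.mem_cons_of_mem _ hw))]
    rcases h a (List.mem_cons_self) with rfl | rfl <;> decide

lemma key0 (s : Finset ℕ) (hs : IsLetter4 s)
    (lat : ∀ k ∈ ({1, 2, 3} : Finset ℕ), contrib4 s (k + 1) ≤ contrib4 s k) : Good s := by
  obtain ⟨hsub, hne, hproper⟩ := hs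
  have hmem : s ∈ U4.powerset := Finset.mem_powerset.2 hsub
  fin_cases hmem <;>
  first
    | exact absurd hne (by decide)
    | exact absurd (by decide) hproper
    | exact Or.inl (by decide)
    | exact Or.inr (Or.inl (by decide))
    | exact Or.inr (Or.inr (by decide))
    | exact absurd (lat 1 (by decide)) (by decide)
    | exact absurd (lat 2 (by decide)) (by decide)
    | exact absurd (lat 3 (by decide)) (by decide)

lemma key1 (prev s : Finset ℕ) (hprev : Good prev) (hs : IsLetter4 s)
    (hcard : prev.card ≤ s.card) (hnd : ¬ Descent4 prev s)
    (c2 c4 : ℤ)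
    (hc2 : prev = {1} → c2 = 0)
    (hc4 : prev.card ≤ 2 → c4 = 0)
    (lat2 : (0 : ℤ) + contrib4 s 3 ≤ c2 + contrib4 s 2)
    (lat3 : c4 + contrib4 s 4 ≤ (0 : ℤ) + contrib4 s 3) : Good s := by
  obtain ⟨hsub, hne, hproper⟩ := hs
  have hmem : s ∈ U4.powerset := Finset.mem_powerset.2 hsub
  rcases hprev with rfl | rfl | rfl
  · have e2 := hc2 rfl
    have e4 := hc4 (by decide)
    subst e2 e4
    fin_cases hmem <;>
    first
      | exact absurd hne (by decide)
      | exact absurd (by decide) hproper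
      | exact Or.inl (by decide)
      | exact Or.inr (Or.inl (by decide))
      | exact Or.inr (Or.inr (by decide))
      | exact absurd (DD_descent (by decide)) hnd
      | exact absurd lat2 (by decide)
      | exact absurd lat3 (by decide)
  · have e4 := hc4 (by decide)
    subst e4
    fin_cases hmem <;>
    first
      | exact absurd hne (by decide)
      | exact absurd hcard (by decide)
      | exact absurd (by decide) hproper
      | exact Or.inr (Or.inl (by decide))
      | exact Or.inr (Or.inr (by decide))
      | exact absurd (DD_descent (by decide)) hnd
      | exact absurd lat3 (by decide)
  · fin_cases hmem <;>
    first
      | exact absurd hne (by decide)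
      | exact absurd hcard (by decide)
      | exact absurd (by decide) hproper
      | exact Or.inr (Or.inr (by decide))
      | exact absurd (DD_descent (by decide)) hnd

lemma classify (L : List (Finset ℕ)) (hletters : ∀ w ∈ L, IsLetter4 w)
    (hsorted : L.Pairwise fun v w => v.card ≤ w.card)
    (hlattice : IsLatticeWord4 L)
    (hnodesc : L.Chain' fun v w => ¬ Descent4 v w) :
    ∀ i (h : i < L.length), Good L[i] := by
  intro i
  induction i using Nat.strong_induction_on with
  | _ i IH =>
  intro h
  have hpre : ∀ w ∈ L.take i, Good w := by
    intro w hw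
    rw [List.mem_iff_getElem] at hw
    obtain ⟨j, hj, rfl⟩ := hw
    simp only [List.length_take, lt_min_iff] at hj
    rw [List.getElem_take]
    exact IH j hj.1 hj.2
  have htake : L.take (i + 1) = L.take i ++ [L[i]] := by
    rw [List.take_succ, List.getElem?_eq_getElem h]
    rfl
  have lat : ∀ k ∈ ({1, 2, 3} : Finset ℕ),
      cum4 (L.take i) (k + 1) + contrib4 L[i] (k + 1)
        ≤ cum4 (L.take i) k + contrib4 L[i] k := by
    intro k hk
    have := hlattice (i + 1) k hk
    rwa [htake, cum4_append_single, cum4_append_single] at this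
  rcases Nat.eq_zero_or_pos i with rfl | hi
  · apply key0 _ (hletters _ (List.getElem_mem h))
    intro k hk
    have := lat k hk
    simpa [cum4] using this
  · have hi1 : i - 1 < L.length := by omega
    have hprev : Good L[i - 1] := IH (i - 1) (by omega) hi1
    have hnd : ¬ Descent4 L[i - 1] L[i] := by
      have := List.isChain_iff_getElem.mp hnodesc (i - 1) (by omega)
      simpa [List.get_eq_getElem, Nat.sub_add_cancel hi] using this
    have hcard : L[i - 1].card ≤ L[i].card := by
      have := List.pairwise_iff_get.mp hsorted ⟨i - 1, hi1⟩ ⟨i, h⟩ (by simp; omega)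
      simpa using this
    have hcards : ∀ w ∈ L.take i, w.card ≤ L[i - 1].card := by
      intro w hw
      rw [List.mem_iff_getElem] at hw
      obtain ⟨j, hj, rfl⟩ := hw
      simp only [List.length_take, lt_min_iff] at hj
      rw [List.getElem_take]
      rcases Nat.lt_or_ge j (i - 1) with hlt | hge
      · have := List.pairwise_iff_get.mp hsorted ⟨j, hj.2⟩ ⟨i - 1, hi1⟩ (by simpa using hlt)
        simpa using this
      · have : j = i - 1 := by omega
        subst this
        exact le_refl _
    have hc3 : cum4 (L.take i) 3 = 0 := cum4_three hpre
    have hc2 : L[i - 1] = {1} → cum4 (L.take i) 2 = 0 := by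
      intro hp
      apply cum4_two_ones
      intro w hw
      have hcle := hcards w hw
      rw [hp] at hcle
      rcases hpre w hw with rfl | rfl | rfl
      · rfl
      · exact absurd hcle (by decide)
      · exact absurd hcle (by decide)
    have hc4 : L[i - 1].card ≤ 2 → cum4 (L.take i) 4 = 0 := by
      intro hp
      apply cum4_four_small
      intro w hw
      have hcle := le_trans (hcards w hw) hp
      rcases hpre w hw with rfl | rfl | rfl
      · exact Or.inl rfl
      · exact Or.inr rfl
      · exact absurd hcle (by decide)
    have lat2 := lat 2 (by decide)
    have lat3 := lat 3 (by decide)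
    rw [hc3] at lat2 lat3
    exact key1 L[i - 1] L[i] hprev (hletters _ (List.getElem_mem h)) hcard hnd
      (cum4 (L.take i) 2) (cum4 (L.take i) 4) hc2 hc4 lat2 lat3

lemma build (L : List (Finset ℕ)) (hg : ∀ w ∈ L, Good w)
    (hsorted : L.Pairwise fun v w => v.card ≤ w.card) :
    ∃ p q s : ℕ,
      L = List.replicate p ({1} : Finset ℕ) ++ List.replicate q ({1, 2} : Finset ℕ)
            ++ List.replicate s ({1, 2, 3} : Finset ℕ) := by
  induction L with
  | nil => exact ⟨0, 0, 0, rfl⟩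
  | cons a t ih =>
    obtain ⟨hrel, hst⟩ := List.pairwise_cons.mp hsorted
    obtain ⟨p, q, s, ht⟩ := ih (fun w hw => hg w (List.mem_cons_of_mem _ hw)) hst
    rcases hg a (List.mem_cons_self) with rfl | rfl | rfl
    · exact ⟨p + 1, q, s, by rw [ht]; simp [List.replicate_succ]⟩
    · have hp : p = 0 := by
        by_contra hp
        have h1 : ({1} : Finset ℕ) ∈ t := by
          rw [ht]; simp [List.mem_replicate, hp]
        exact absurd (hrel _ h1) (by decide)
      subst hp
      exact ⟨0, q + 1, s, by rw [ht]; simp [List.replicate_succ]⟩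
    · have hp : p = 0 := by
        by_contra hp
        have h1 : ({1} : Finset ℕ) ∈ t := by
          rw [ht]; simp [List.mem_replicate, hp]
        exact absurd (hrel _ h1) (by decide)
      have hq : q = 0 := by
        by_contra hq
        have h1 : ({1, 2} : Finset ℕ) ∈ t := by
          rw [ht]; simp [List.mem_replicate, hq]
        exact absurd (hrel _ h1) (by decide)
      subst hp; subst hq
      exact ⟨0, 0, s + 1, by rw [ht]; simp [List.replicate_succ]⟩

/-- every sorted lattice word over the `r = 4` alphabet with no descents has
the form `1^p {1,2}^q 4̄^s` (where `4̄ = {1,2,3}`). -/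
theorem stmt2 (L : List (Finset ℕ)) (hletters : ∀ w ∈ L, IsLetter4 w)
    (hsorted : L.Pairwise fun v w => v.card ≤ w.card)
    (hlattice : IsLatticeWord4 L)
    (hnodesc : L.Chain' fun v w => ¬ Descent4 v w) :
    ∃ p q s : ℕ,
      L = List.replicate p ({1} : Finset ℕ) ++ List.replicate q ({1, 2} : Finset ℕ)
            ++ List.replicate s ({1, 2, 3} : Finset ℕ) := by
  apply build L _ hsorted
  intro w hw
  rw [List.mem_iff_getElem] at hw
  obtain ⟨i, hi, rfl⟩ := hw
  exact classify L hletters hsorted hlattice hnodesc i hi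
end
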